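/- Let L be a symmetric positive semidefinite N×N real matrix with kernel equal to span{𝟙ₙ}, and let Q be a symmetric N×N real matrix with 𝟙ₙᵀ Q 𝟙ₙ < 0. Then there exists g ∈ ℝ such that Q + gL is negative definite. -/

import Mathlib

open Real Matrix
open scoped Matrix

/-- if L ⪰ 0 symmetric with ker L = span{𝟙}, Q symmetric with
𝟙ᵀQ𝟙 < 0, then there is g ∈ ℝ with Q + gL negative definite. -/
theorem stmt5 (N : ℕ) (hN : 1 ≤ N) (L Q : Matrix (Fin N) (Fin N) ℝ)
    (hL : L.PosSemidef)
    (hker : LinearMap.ker (Matrix.toLin' L) =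
      Submodule.span ℝ {(fun _ : Fin N => (1 : ℝ))})
    (hQ : Q.IsSymm)
    (hQ1 : (fun _ : Fin N => (1 : ℝ)) ⬝ᵥ Q.mulVec (fun _ : Fin N => (1 : ℝ)) < 0) :
    ∃ g : ℝ, (-(Q + g • L)).PosDef := by
  classical
  set one : Fin N → ℝ := fun _ => (1 : ℝ) with hone
  -- quadratic forms
  set φ : (Fin N → ℝ) → ℝ := fun x => x ⬝ᵥ Q.mulVec x with hφ
  set ψ : (Fin N → ℝ) → ℝ := fun x => x ⬝ᵥ L.mulVec x with hψ
  have hφc : Continuous φ := (continuous_id).dotProduct ((continuous_const).matrix_mulVec continuous_id)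
  have hψc : Continuous ψ := (continuous_id).dotProduct ((continuous_const).matrix_mulVec continuous_id)
  -- on the sphere, if ψ x = 0 then φ x < 0
  have key : ∀ x ∈ Metric.sphere (0 : Fin N → ℝ) 1, ψ x = 0 → φ x < 0 := by
    intro x hx hψx
    have hLx : L.mulVec x = 0 := by
      have := (hL.dotProduct_mulVec_zero_iff x).mp (by simpa using hψx)
      simpa using this
    have hmem : x ∈ LinearMap.ker (Matrix.toLin' L) := by
      simp [LinearMap.mem_ker, Matrix.toLin'_apply, hLx]
    rw [hker, Submodule.mem_span_singleton] at hmem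
    obtain ⟨c, rfl⟩ := hmem
    have hc : c ≠ 0 := by
      rintro rfl
      simp at hx
    have : φ (c • one) = c^2 * (one ⬝ᵥ Q.mulVec one) := by
      simp [hφ, Matrix.mulVec_smul, smul_dotProduct, dotProduct_smul]
      ring
    rw [this]
    exact mul_neg_of_pos_of_neg (by positivity) hQ1
  have hScompact : IsCompact (Metric.sphere (0 : Fin N → ℝ) 1) := isCompact_sphere 0 1
  -- set A ⊆ sphere where φ ≥ 0
  set A : Set (Fin N → ℝ) := {x ∈ Metric.sphere (0 : Fin N → ℝ) 1 | 0 ≤ φ x} with hA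
  have hAcompact : IsCompact A :=
    hScompact.of_isClosed_subset
      (Metric.isClosed_sphere.inter (isClosed_le continuous_const hφc))
      (fun x hx => hx.1)
  have hψpos : ∀ x ∈ A, 0 < ψ x := by
    intro x hx
    rcases lt_or_eq_of_le (hL.dotProduct_mulVec_nonneg x) with h | h
    · simpa [hψ] using h
    · exact absurd (key x hx.1 (by simpa [hψ] using h.symm)) (not_lt.mpr hx.2)
  -- choose g
  have main : ∃ g : ℝ, g ≤ 0 ∧ ∀ x ∈ A, φ x + g * ψ x < 0 := by
    by_cases hAne : A.Nonempty
    · obtain ⟨xm, hxm, hxmin⟩ := hAcompact.exists_isMinOn hAne hψc.continuousOn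
      obtain ⟨xM, hxM, hxmax⟩ := hAcompact.exists_isMaxOn hAne hφc.continuousOn
      set m := ψ xm with hm
      have hm0 : 0 < m := hψpos xm hxm
      set C := φ xM with hC
      have hC0 : 0 ≤ C := hxM.2
      have hgneg : -(C + 1) / m < 0 := div_neg_of_neg_of_pos (by linarith) hm0
      refine ⟨-(C + 1) / m, le_of_lt hgneg, ?_⟩
      intro x hx
      have hmx : m ≤ ψ x := hxmin hx
      have hgψ : (-(C + 1) / m) * ψ x ≤ (-(C + 1) / m) * m :=
        mul_le_mul_of_nonpos_left hmx (le_of_lt hgneg)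
      have heq : (-(C + 1) / m) * m = -(C + 1) := by field_simp
      have hCx : φ x ≤ C := hxmax hx
      nlinarith
    · exact ⟨0, le_refl 0, fun x hx => absurd ⟨x, hx⟩ hAne⟩
  obtain ⟨g, hg0, hgA⟩ := main
  -- negative on the whole sphere
  have hsphere : ∀ x ∈ Metric.sphere (0 : Fin N → ℝ) 1, φ x + g * ψ x < 0 := by
    intro x hx
    by_cases hφx : 0 ≤ φ x
    · exact hgA x ⟨hx, hφx⟩
    · have : g * ψ x ≤ 0 := mul_nonpos_of_nonpos_of_nonneg hg0 (hL.dotProduct_mulVec_nonneg x)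
      push_neg at hφx
      linarith
  refine ⟨g, posDef_iff_dotProduct_mulVec.mpr ⟨?_, ?_⟩⟩
  · -- Hermitian
    have hLs : L.IsSymm := hL.1
    rw [Matrix.IsHermitian] at *
    ext i j
    simp [Matrix.conjTranspose, Matrix.transpose]
    have h1 : Q j i = Q i j := by
      conv_lhs => rw [← hQ]
      simp [Matrix.transpose_apply]
    have h2 : L j i = L i j := by
      conv_lhs => rw [← hL.1]
      simp [Matrix.conjTranspose_apply]
    rw [h1, h2]
  · intro x hx
    have hxn : ‖x‖ ≠ 0 := norm_ne_zero_iff.mpr hx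
    set u : Fin N → ℝ := ‖x‖⁻¹ • x with hu
    have hus : u ∈ Metric.sphere (0 : Fin N → ℝ) 1 := by
      simp [hu, norm_smul, abs_of_nonneg (inv_nonneg.mpr (norm_nonneg x)),
        inv_mul_cancel₀ hxn]
    have hneg := hsphere u hus
    have hexp : φ u + g * ψ u = (‖x‖⁻¹)^2 * (φ x + g * ψ x) := by
      simp [hφ, hψ, hu, Matrix.mulVec_smul, smul_dotProduct, dotProduct_smul]
      ring
    rw [hexp] at hneg
    have h2 : φ x + g * ψ x < 0 := by
      have hp : (0:ℝ) < (‖x‖⁻¹)^2 := by positivity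
      nlinarith
    have : star x ⬝ᵥ (-(Q + g • L)).mulVec x = -(φ x + g * ψ x) := by
      simp [hφ, hψ, Matrix.add_mulVec, Matrix.neg_mulVec, Matrix.smul_mulVec,
        dotProduct_add, dotProduct_neg, dotProduct_smul]
    rw [this]
    linarith
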